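/- For p, q ∈ ℍ such that p does not lie on the 2-sphere [−q] (i.e. it is not the case that Re p = −Re q and |Im p| = |Im q|), the quaternions |p|² + 2 Re(p) q̄ + q̄² and |q|² + 2 Re(q) p + p² are nonzero and (p̄ + q̄)(|p|² + 2 Re(p) q̄ + q̄²)⁻¹ = (|q|² + 2 Re(q) p + p²)⁻¹ (p + q). -/

import Mathlib

local notation "ℍ" => Quaternion ℝ

private lemma quat_coe_two : (((2:ℝ)):ℍ) = 2 := by
  have := Quaternion.coe_natCast (R := ℝ) 2
  push_cast at this
  exact this

private lemma quat_norm_im_sq (x : ℍ) : ‖x.im‖ * ‖x.im‖ = x.imI^2 + x.imJ^2 + x.imK^2 := by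
  rw [← Quaternion.normSq_eq_norm_mul_self]
  simp [Quaternion.normSq_def']

private lemma quat_key_mem (x y : ℍ)
    (h0 : ((Quaternion.normSq y : ℝ) : ℍ) + 2 * (y.re : ℍ) * x + x ^ 2 = 0) :
    x.re = -y.re ∧ ‖x.im‖ = ‖y.im‖ := by
  rw [show (2 : ℍ) * (y.re : ℍ) = ((2 * y.re : ℝ) : ℍ) by
    rw [Quaternion.coe_mul, quat_coe_two]] at h0
  rw [Quaternion.ext_iff] at h0
  obtain ⟨h1, h2, h3, h4⟩ := h0
  simp only [Quaternion.normSq_def', pow_two, Quaternion.re_mul, Quaternion.imI_mul,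
    Quaternion.imJ_mul, Quaternion.imK_mul, Quaternion.re_add,
    Quaternion.imI_add, Quaternion.imJ_add, Quaternion.imK_add, Quaternion.re_coe,
    Quaternion.imI_coe, Quaternion.imJ_coe, Quaternion.imK_coe, Quaternion.re_zero,
    Quaternion.imI_zero, Quaternion.imJ_zero, Quaternion.imK_zero] at h1 h2 h3 h4
  ring_nf at h1 h2 h3 h4
  by_cases hc : x.re = -y.re
  · refine ⟨hc, ?_⟩
    have hsq : ‖x.im‖ * ‖x.im‖ = ‖y.im‖ * ‖y.im‖ := by
      rw [quat_norm_im_sq, quat_norm_im_sq]; nlinarith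
    have := norm_nonneg x.im
    have := norm_nonneg y.im
    nlinarith
  · exfalso
    have hI : x.imI = 0 := by
      have h2' : (y.re + x.re) * (x.imI * 2) = 0 := by ring_nf; linarith
      rcases mul_eq_zero.mp h2' with h | h
      · exact absurd (by linarith) hc
      · linarith
    have hJ : x.imJ = 0 := by
      have h3' : (y.re + x.re) * (x.imJ * 2) = 0 := by ring_nf; linarith
      rcases mul_eq_zero.mp h3' with h | h
      · exact absurd (by linarith) hc
      · linarith
    have hK : x.imK = 0 := by
      have h4' : (y.re + x.re) * (x.imK * 2) = 0 := by ring_nf; linarith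
      rcases mul_eq_zero.mp h4' with h | h
      · exact absurd (by linarith) hc
      · linarith
    apply hc
    nlinarith [sq_nonneg (x.re + y.re), sq_nonneg y.imI, sq_nonneg y.imJ, sq_nonneg y.imK]

private lemma quat_main_identity (p q : ℍ) :
    (((Quaternion.normSq q : ℝ) : ℍ) + 2 * (q.re : ℍ) * p + p ^ 2) * (star p + star q)
      = (p + q) * (((Quaternion.normSq p : ℝ) : ℍ) + 2 * (p.re : ℍ) * star q + (star q) ^ 2) := by
  rw [show (2 : ℍ) * (q.re : ℍ) = ((2 * q.re : ℝ) : ℍ) by rw [Quaternion.coe_mul, quat_coe_two],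
      show (2 : ℍ) * (p.re : ℍ) = ((2 * p.re : ℝ) : ℍ) by rw [Quaternion.coe_mul, quat_coe_two]]
  ext <;>
    simp only [Quaternion.normSq_def', pow_two, Quaternion.re_mul, Quaternion.imI_mul,
      Quaternion.imJ_mul, Quaternion.imK_mul, Quaternion.re_add,
      Quaternion.imI_add, Quaternion.imJ_add, Quaternion.imK_add, Quaternion.re_coe,
      Quaternion.imI_coe, Quaternion.imJ_coe, Quaternion.imK_coe, Quaternion.re_star,
      Quaternion.imI_star, Quaternion.imJ_star, Quaternion.imK_star] <;>
    ring

/-- The two expressions for the reproducing kernel `k(p, q)` of the Hardy space of the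
half-space: for `p` not on the sphere `[−q]`, the quaternions
`|p|² + 2 Re(p) q̄ + q̄²` and `|q|² + 2 Re(q) p + p²` are nonzero and
`(p̄ + q̄)(|p|² + 2 Re(p) q̄ + q̄²)⁻¹ = (|q|² + 2 Re(q) p + p²)⁻¹ (p + q)`. -/
theorem hardy_kernel_two_expressions (p q : ℍ)
    (h : ¬(p.re = -q.re ∧ ‖p.im‖ = ‖q.im‖)) :
    ((Quaternion.normSq p : ℝ) : ℍ) + 2 * (p.re : ℍ) * star q + (star q) ^ 2 ≠ 0 ∧
    ((Quaternion.normSq q : ℝ) : ℍ) + 2 * (q.re : ℍ) * p + p ^ 2 ≠ 0 ∧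
    (star p + star q) *
        (((Quaternion.normSq p : ℝ) : ℍ) + 2 * (p.re : ℍ) * star q + (star q) ^ 2)⁻¹
      = (((Quaternion.normSq q : ℝ) : ℍ) + 2 * (q.re : ℍ) * p + p ^ 2)⁻¹ * (p + q) := by
  have hA : ((Quaternion.normSq p : ℝ) : ℍ) + 2 * (p.re : ℍ) * star q + (star q) ^ 2 ≠ 0 := by
    intro h0
    obtain ⟨h1, h2⟩ := quat_key_mem (star q) p h0
    rw [Quaternion.re_star] at h1
    rw [Quaternion.im_star, norm_neg] at h2
    exact h ⟨by linarith, h2.symm⟩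
  have hB : ((Quaternion.normSq q : ℝ) : ℍ) + 2 * (q.re : ℍ) * p + p ^ 2 ≠ 0 := by
    intro h0
    obtain ⟨h1, h2⟩ := quat_key_mem p q h0
    exact h ⟨h1, h2⟩
  refine ⟨hA, hB, ?_⟩
  apply mul_left_cancel₀ hB
  rw [← mul_assoc, ← mul_assoc, mul_inv_cancel₀ hB, one_mul, quat_main_identity p q,
    mul_assoc, mul_inv_cancel₀ hA, mul_one]
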